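/- arXiv:2306.00222 — 3 statements merged into one kernel-verified Lean document; each statement's English description precedes it below -/
import Mathlib

section
/- Let G be a finite connected simple graph on vertex set V, let T be a spanning tree of G, let S ⊆ V be a nonempty subset such that the subgraph of T induced on S is connected, and let T_S be any spanning tree of the induced subgraph G[S]. Then the spanning subgraph of G whose edge set is (E(T) \ E(T[S])) ∪ E(T_S) is a spanning tree of G. -/
open SimpleGraph

section Aux

lemma reach_mono' {V} {G G' : SimpleGraph V}
    (h : ∀ ⦃a b⦄, G.Adj a b → G'.Reachable a b) {u v : V} (hr : G.Reachable u v) :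
    G'.Reachable u v := by
  obtain ⟨w⟩ := hr
  induction w with
  | nil => exact Reachable.refl _
  | cons ha _ ih => exact (h ha).trans ih

lemma del_nonbridge_connected {V} {G : SimpleGraph V} (hG : G.Connected) {v w : V}
    (hadj : G.Adj v w) (hnb : ¬ G.IsBridge s(v, w)) :
    (G \ SimpleGraph.fromEdgeSet {s(v, w)}).Connected := by
  rw [isBridge_iff] at hnb
  push_neg at hnb
  have hr := hnb
  have hne : Nonempty V := hG.nonempty
  refine Connected.mk (fun a b => ?_)
  refine reach_mono' (fun x y hxy => ?_) (hG.preconnected a b)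
  by_cases he : s(x, y) = s(v, w)
  · rw [Sym2.eq_iff] at he
    rcases he with ⟨rfl, rfl⟩ | ⟨rfl, rfl⟩
    · exact hr
    · exact hr.symm
  · exact SimpleGraph.Adj.reachable (by
      simp only [sdiff_adj, fromEdgeSet_adj]
      exact ⟨hxy, fun h => he h.1⟩)

lemma tree_ncard {V} [Fintype V] {G : SimpleGraph V} (hT : G.IsTree) :
    G.edgeSet.ncard + 1 = Fintype.card V := by
  classical
  have : Fintype G.edgeSet := Fintype.ofFinite _
  rw [Set.ncard_eq_toFinset_card']
  have h2 := hT.card_edgeFinset (G := G)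
  convert h2 using 3
  ext; simp

lemma conn_lb {V} [Fintype V] : ∀ (n : ℕ) (G : SimpleGraph V), G.edgeSet.ncard = n →
    G.Connected → Fintype.card V ≤ G.edgeSet.ncard + 1 := by
  intro n
  induction n using Nat.strong_induction_on with
  | _ n ih =>
    intro G hn hG
    by_cases hac : G.IsAcyclic
    · exact (tree_ncard ⟨hG, hac⟩).ge
    · rw [isAcyclic_iff_forall_adj_isBridge] at hac
      push_neg at hac
      obtain ⟨v, w, hadj, hnb⟩ := hac
      set G' := G \ SimpleGraph.fromEdgeSet {s(v, w)} with hG'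
      have hconn' := del_nonbridge_connected hG hadj hnb
      have hnd : ({s(v, w)} : Set (Sym2 V)) \ Sym2.diagSet = {s(v, w)} :=
        sdiff_eq_left.mpr (by simp [Set.disjoint_singleton_left, hadj.ne])
      have hsub : G'.edgeSet = G.edgeSet \ {s(v, w)} := by
        rw [hG', edgeSet_sdiff, edgeSet_fromEdgeSet, hnd]
      have hmem : s(v, w) ∈ G.edgeSet := hadj
      have hfin : G.edgeSet.Finite := Set.toFinite _
      have hcard' : G'.edgeSet.ncard = n - 1 := by
        rw [hsub, ← hn, Set.ncard_diff_singleton_of_mem hmem]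
      have hpos : 1 ≤ n := by
        rw [← hn]
        exact (Set.ncard_pos hfin).mpr ⟨_, hmem⟩
      have := ih (n - 1) (by omega) G' hcard' hconn'
      rw [hcard'] at this
      omega

lemma tree_of_ncard {V} [Fintype V] {G : SimpleGraph V} (hG : G.Connected)
    (h : G.edgeSet.ncard + 1 = Fintype.card V) : G.IsTree := by
  refine ⟨hG, ?_⟩
  by_contra hac
  rw [isAcyclic_iff_forall_adj_isBridge] at hac
  push_neg at hac
  obtain ⟨v, w, hadj, hnb⟩ := hac
  set G' := G \ SimpleGraph.fromEdgeSet {s(v, w)} with hG'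
  have hconn' := del_nonbridge_connected hG hadj hnb
  have hnd : ({s(v, w)} : Set (Sym2 V)) \ Sym2.diagSet = {s(v, w)} :=
    sdiff_eq_left.mpr (by simp [Set.disjoint_singleton_left, hadj.ne])
  have hsub : G'.edgeSet = G.edgeSet \ {s(v, w)} := by
    rw [hG', edgeSet_sdiff, edgeSet_fromEdgeSet, hnd]
  have hmem : s(v, w) ∈ G.edgeSet := hadj
  have hfin : G.edgeSet.Finite := Set.toFinite _
  have hcard' : G'.edgeSet.ncard = G.edgeSet.ncard - 1 := by
    rw [hsub, Set.ncard_diff_singleton_of_mem hmem]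
  have hpos : 1 ≤ G.edgeSet.ncard := (Set.ncard_pos hfin).mpr ⟨_, hmem⟩
  have := conn_lb _ G' rfl hconn'
  omega

lemma induce_acyclic {V} {T : SimpleGraph V} (h : T.IsAcyclic) (S : Set V) :
    (T.induce S).IsAcyclic := by
  intro v c hc
  have hc1 : ((c.map (SimpleGraph.Embedding.spanningCoe (T.induce S)).toHom)).IsCycle :=
    hc.map (Function.Embedding.subtype _).injective
  have hc2 := hc1.mapLe (spanningCoe_induce_le (G := T) S)
  exact h _ hc2

end Aux

/-- The edge set of a graph on a subtype `S`, viewed as a set of edges of the ambient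
vertex type. -/
def liftedEdges {V : Type*} {S : Set V} (H : SimpleGraph S) : Set (Sym2 V) :=
  Sym2.map (Subtype.val : S → V) '' H.edgeSet

lemma lifted_eq {V : Type*} {S : Set V} (H : SimpleGraph S) :
    liftedEdges H = H.spanningCoe.edgeSet := by
  ext e
  induction e with
  | _ x y =>
    simp only [liftedEdges, Set.mem_image, mem_edgeSet, map_adj,
      Function.Embedding.coe_subtype]
    constructor
    · rintro ⟨e', he', hmap⟩
      induction e' with
      | _ a b =>
        simp only [Sym2.map_pair_eq, Sym2.eq_iff] at hmap
        rw [mem_edgeSet] at he'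
        rcases hmap with ⟨rfl, rfl⟩ | ⟨rfl, rfl⟩
        · exact ⟨a, b, he', rfl, rfl⟩
        · exact ⟨b, a, he'.symm, rfl, rfl⟩
    · rintro ⟨a, b, hab, rfl, rfl⟩
      exact ⟨s(a, b), hab, rfl⟩

/-- The result of the sub-graph (SG) mutation: replace the edges of `T` inside `S` by the
edges of a spanning tree `Ts` of the induced subgraph on `S`. -/
def sgMutant {V : Type*} (T : SimpleGraph V) (S : Set V) (Ts : SimpleGraph S) :
    SimpleGraph V :=
  SimpleGraph.fromEdgeSet ((T.edgeSet \ liftedEdges (T.induce S)) ∪ liftedEdges Ts)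

lemma sgMutant_eq {V : Type*} (T : SimpleGraph V) (S : Set V) (Ts : SimpleGraph S) :
    sgMutant T S Ts = (T \ (T.induce S).spanningCoe) ⊔ Ts.spanningCoe := by
  have hset : (T.edgeSet \ liftedEdges (T.induce S)) ∪ liftedEdges Ts
      = ((T \ (T.induce S).spanningCoe) ⊔ Ts.spanningCoe).edgeSet := by
    rw [edgeSet_sup, edgeSet_sdiff, lifted_eq, lifted_eq]
  rw [sgMutant, hset, fromEdgeSet_edgeSet]

/-- Replacing the connected sub-tree of a spanning tree `T` on `S` by any spanning tree of
the induced subgraph `G[S]` again yields a spanning tree of `G`. -/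
theorem sgMutant_is_spanning_tree {V : Type*} [Fintype V]
    (G : SimpleGraph V) (hG : G.Connected)
    (T : SimpleGraph V) (hTle : T ≤ G) (hT : T.IsTree)
    (S : Set V) (hS : S.Nonempty) (hconn : (T.induce S).Connected)
    (Ts : SimpleGraph S) (hTsle : Ts ≤ G.induce S) (hTs : Ts.IsTree) :
    sgMutant T S Ts ≤ G ∧ (sgMutant T S Ts).IsTree := by
  classical
  set P : SimpleGraph V := (T.induce S).spanningCoe with hP
  set Q : SimpleGraph V := Ts.spanningCoe with hQ
  have hM : sgMutant T S Ts = (T \ P) ⊔ Q := sgMutant_eq T S Ts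
  -- Q ≤ G
  have hQle : Q ≤ G := by
    intro x y hxy
    obtain ⟨hne, a, b, hab, rfl, rfl⟩ := hxy
    have h2 : (G.induce S).spanningCoe.Adj ↑a ↑b := ⟨hne, a, b, hTsle hab, rfl, rfl⟩
    exact spanningCoe_induce_le (G := G) S h2
  -- part 1
  have hle : sgMutant T S Ts ≤ G := by
    rw [hM]
    exact sup_le (le_trans sdiff_le hTle) hQle
  refine ⟨hle, ?_⟩
  -- connectivity
  have hQreach : ∀ a b : S, Q.Reachable ↑a ↑b := by
    intro a b
    have := hTs.isConnected.preconnected a b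
    exact this.map (SimpleGraph.Embedding.spanningCoe Ts).toHom
  have hstep : ∀ ⦃x y : V⦄, T.Adj x y → ((T \ P) ⊔ Q).Reachable x y := by
    intro x y hxy
    by_cases hmem : x ∈ S ∧ y ∈ S
    · exact (hQreach ⟨x, hmem.1⟩ ⟨y, hmem.2⟩).mono le_sup_right
    · refine SimpleGraph.Adj.reachable (Or.inl ?_ : ((T \ P) ⊔ Q).Adj x y)
      refine ⟨hxy, fun hPadj => hmem ?_⟩
      obtain ⟨_, a, b, _, rfl, rfl⟩ := hPadj
      exact ⟨a.2, b.2⟩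
  have hconnM : ((T \ P) ⊔ Q).Connected := by
    have hne : Nonempty V := hG.nonempty
    exact Connected.mk fun a b => reach_mono' hstep (hT.isConnected.preconnected a b)
  -- counting
  have hfinV : Finite V := Finite.of_fintype V
  have hSfin : Fintype S := Fintype.ofFinite S
  have hPsub : P.edgeSet ⊆ T.edgeSet := edgeSet_mono (spanningCoe_induce_le (G := T) S)
  have hindTree : (T.induce S).IsTree := ⟨hconn, induce_acyclic hT.IsAcyclic S⟩
  have nT : T.edgeSet.ncard + 1 = Fintype.card V := tree_ncard hT
  have nTs : Ts.edgeSet.ncard + 1 = Fintype.card S := tree_ncard hTs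
  have nInd : (T.induce S).edgeSet.ncard + 1 = Fintype.card S := tree_ncard hindTree
  have hinj : Function.Injective (Sym2.map (Subtype.val : S → V)) :=
    Sym2.map.injective Subtype.val_injective
  have nP : P.edgeSet.ncard = (T.induce S).edgeSet.ncard := by
    rw [← lifted_eq]
    exact Set.ncard_image_of_injective _ hinj
  have nQ : Q.edgeSet.ncard = Ts.edgeSet.ncard := by
    rw [← lifted_eq]
    exact Set.ncard_image_of_injective _ hinj
  have hdisj : Disjoint (T.edgeSet \ P.edgeSet) Q.edgeSet := by
    rw [Set.disjoint_right]
    intro e heQ heT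
    rw [← lifted_eq] at heQ
    obtain ⟨e', he', rfl⟩ := heQ
    refine heT.2 ?_
    rw [← lifted_eq]
    refine ⟨e', ?_, rfl⟩
    induction e' with
    | _ a b =>
      rw [mem_edgeSet, comap_adj]
      have := heT.1
      rw [Sym2.map_pair_eq, mem_edgeSet] at this
      exact this
  have hMedges : ((T \ P) ⊔ Q).edgeSet = (T.edgeSet \ P.edgeSet) ∪ Q.edgeSet := by
    rw [edgeSet_sup, edgeSet_sdiff]
  have nM : ((T \ P) ⊔ Q).edgeSet.ncard
      = (T.edgeSet \ P.edgeSet).ncard + Q.edgeSet.ncard := by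
    rw [hMedges]
    exact Set.ncard_union_eq hdisj (Set.toFinite _) (Set.toFinite _)
  have ndiff : (T.edgeSet \ P.edgeSet).ncard = T.edgeSet.ncard - P.edgeSet.ncard :=
    Set.ncard_diff hPsub (Set.toFinite _)
  have nPle : P.edgeSet.ncard ≤ T.edgeSet.ncard :=
    Set.ncard_le_ncard hPsub (Set.toFinite _)
  have hfinal : ((T \ P) ⊔ Q).edgeSet.ncard + 1 = Fintype.card V := by omega
  rw [hM]
  exact tree_of_ncard hconnM hfinal
end

section
/- Let G be a finite connected simple graph on vertex set V with two edge-cost functions c1, c2 : E(G) → ℝ, let λ ∈ [0, 1], let T be a spanning tree of G, let S ⊆ V be nonempty with the subgraph of T induced on S connected, and let T_S be a spanning tree of the induced subgraph G[S] that minimizes the scalarized cost ∑_{e} (λ c1(e) + (1−λ) c2(e)) among all spanning trees of G[S]. Let T' be the spanning subgraph of G with edge set (E(T) \ E(T[S])) ∪ E(T_S). Then λ c1(T') + (1−λ) c2(T') ≤ λ c1(T) + (1−λ) c2(T), where c_i(T) denotes ∑_{e ∈ E(T)} c_i(e). -/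
/-- Total cost of (the edges of) a graph with respect to an edge-cost function. -/
noncomputable def edgeCost {V : Type*} (H : SimpleGraph V) (c : Sym2 V → ℝ) : ℝ :=
  ∑ᶠ e ∈ H.edgeSet, c e

/-- Total cost of a graph on a subtype, with respect to an edge-cost function of the
ambient vertex type. -/
noncomputable def subEdgeCost {V : Type*} {S : Set V} (H : SimpleGraph S) (c : Sym2 V → ℝ) : ℝ :=
  ∑ᶠ e ∈ H.edgeSet, c (Sym2.map (Subtype.val : S → V) e)

lemma subEdgeCost_eq {V : Type*} {S : Set V} (H : SimpleGraph S) (c : Sym2 V → ℝ) :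
    subEdgeCost H c = ∑ᶠ e ∈ liftedEdges H, c e := by
  rw [subEdgeCost, liftedEdges, finsum_mem_image]
  exact fun x _ y _ h => Sym2.map.injective Subtype.val_injective h

/-- The scalarized-cost improvement step of the sub-graph mutation: the mutant has
weighted-sum cost at most that of the parent. -/
theorem sgMutant_scalarized_cost_le {V : Type*} [Fintype V]
    (G : SimpleGraph V) (hG : G.Connected)
    (c1 c2 : Sym2 V → ℝ) (lam : ℝ) (hlam0 : 0 ≤ lam) (hlam1 : lam ≤ 1)
    (T : SimpleGraph V) (hTle : T ≤ G) (hT : T.IsTree)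
    (S : Set V) (hS : S.Nonempty) (hconn : (T.induce S).Connected)
    (Ts : SimpleGraph S) (hTsle : Ts ≤ G.induce S) (hTs : Ts.IsTree)
    (hmin : ∀ T'' : SimpleGraph S, T'' ≤ G.induce S → T''.IsTree →
      subEdgeCost Ts (fun e => lam * c1 e + (1 - lam) * c2 e) ≤
        subEdgeCost T'' (fun e => lam * c1 e + (1 - lam) * c2 e)) :
    lam * edgeCost (sgMutant T S Ts) c1 + (1 - lam) * edgeCost (sgMutant T S Ts) c2 ≤
      lam * edgeCost T c1 + (1 - lam) * edgeCost T c2 := by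
  classical
  set c : Sym2 V → ℝ := fun e => lam * c1 e + (1 - lam) * c2 e with hcdef
  have hcost : ∀ H : SimpleGraph V,
      lam * edgeCost H c1 + (1 - lam) * edgeCost H c2 = edgeCost H c := by
    intro H
    simp only [edgeCost, finsum_mem_eq_finite_toFinset_sum _ (Set.toFinite _)]
    rw [Finset.mul_sum, Finset.mul_sum, ← Finset.sum_add_distrib]
  rw [hcost, hcost]
  set A := T.edgeSet
  set B := liftedEdges (T.induce S)
  set C := liftedEdges Ts
  have hBA : B ⊆ A := by
    rintro e ⟨e', he', rfl⟩
    induction e' with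
    | h x y =>
      simp only [SimpleGraph.mem_edgeSet, SimpleGraph.comap_adj] at he'
      exact he'
  have hdisj : Disjoint (A \ B) C := by
    rw [Set.disjoint_right]
    rintro e ⟨e', he', rfl⟩ ⟨heA, heB⟩
    apply heB
    induction e' with
    | h x y =>
      refine ⟨s(x, y), ?_, rfl⟩
      exact heA
  have hnodiag : ∀ e ∈ (A \ B) ∪ C, ¬ e.IsDiag := by
    rintro e (⟨heA, -⟩ | ⟨e', he', rfl⟩)
    · exact T.not_isDiag_of_mem_edgeSet heA
    · rw [Sym2.isDiag_map Subtype.val_injective]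
      exact Ts.not_isDiag_of_mem_edgeSet he'
  have hedge : (sgMutant T S Ts).edgeSet = (A \ B) ∪ C := by
    rw [sgMutant, SimpleGraph.edgeSet_fromEdgeSet]
    ext e; simp only [Set.mem_diff, Set.mem_setOf_eq, and_iff_left_iff_imp]
    exact ⟨fun h => h.1, fun h => ⟨h, hnodiag e h⟩⟩
  have hsplit : ∑ᶠ e ∈ A, c e = (∑ᶠ e ∈ B, c e) + ∑ᶠ e ∈ A \ B, c e := by
    rw [← finsum_mem_union Set.disjoint_sdiff_right (Set.toFinite _) (Set.toFinite _),
      Set.union_diff_cancel hBA]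
  have hmut : edgeCost (sgMutant T S Ts) c = (∑ᶠ e ∈ A \ B, c e) + ∑ᶠ e ∈ C, c e := by
    rw [edgeCost, hedge, finsum_mem_union hdisj (Set.toFinite _) (Set.toFinite _)]
  have hTind : (T.induce S).IsTree := by
    refine ⟨hconn, fun v w hw => ?_⟩
    exact hT.IsAcyclic (w.map (SimpleGraph.Embedding.induce S).toHom)
      (hw.map Subtype.val_injective)
  have hTindle : T.induce S ≤ G.induce S := fun a b hab => hTle hab
  have hkey : subEdgeCost Ts c ≤ subEdgeCost (T.induce S) c := hmin _ hTindle hTind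
  rw [subEdgeCost_eq, subEdgeCost_eq] at hkey
  show edgeCost (sgMutant T S Ts) c ≤ edgeCost T c
  rw [hmut, show edgeCost T c = ∑ᶠ e ∈ A, c e from rfl, hsplit]
  linarith
end

section
/- Let G be a finite connected simple graph with two edge-cost functions c1, c2 : E(G) → ℝ, let λ ∈ (0, 1), let T be a spanning tree of G, and let D ⊆ E(T). Suppose T* is a spanning tree of G with E(T) \ D ⊆ E(T*) that minimizes the scalarized cost ∑_{e ∈ E(T')} (λ c1(e) + (1−λ) c2(e)) among all spanning trees T' of G with E(T) \ D ⊆ E(T'). Then T does not dominate T*; that is, it is not the case that c1(T) ≤ c1(T*) and c2(T) ≤ c2(T*) with at least one of these inequalities strict. -/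
/-- The Pareto-beneficial property of the scalarized unconnected sub-graph mutation
(USGS): the mutant cannot be dominated by its parent. -/
theorem usgMutant_not_dominated_by_parent {V : Type*} [Fintype V]
    (G : SimpleGraph V) (hG : G.Connected)
    (c1 c2 : Sym2 V → ℝ) (lam : ℝ) (hlam0 : 0 < lam) (hlam1 : lam < 1)
    (T : SimpleGraph V) (hTle : T ≤ G) (hT : T.IsTree)
    (D : Set (Sym2 V)) (hD : D ⊆ T.edgeSet)
    (Tstar : SimpleGraph V) (hTstarle : Tstar ≤ G) (hTstar : Tstar.IsTree)
    (hTstarD : T.edgeSet \ D ⊆ Tstar.edgeSet)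
    (hmin : ∀ T' : SimpleGraph V, T' ≤ G → T'.IsTree → T.edgeSet \ D ⊆ T'.edgeSet →
      edgeCost Tstar (fun e => lam * c1 e + (1 - lam) * c2 e) ≤
        edgeCost T' (fun e => lam * c1 e + (1 - lam) * c2 e)) :
    ¬ (edgeCost T c1 ≤ edgeCost Tstar c1 ∧ edgeCost T c2 ≤ edgeCost Tstar c2 ∧
        (edgeCost T c1 < edgeCost Tstar c1 ∨ edgeCost T c2 < edgeCost Tstar c2)) := by
  rintro ⟨h1, h2, h3⟩
  have key : edgeCost Tstar (fun e => lam * c1 e + (1 - lam) * c2 e) ≤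
      edgeCost T (fun e => lam * c1 e + (1 - lam) * c2 e) :=
    hmin T hTle hT (Set.diff_subset)
  have hsplit : ∀ H : SimpleGraph V,
      edgeCost H (fun e => lam * c1 e + (1 - lam) * c2 e) =
        lam * edgeCost H c1 + (1 - lam) * edgeCost H c2 := by
    intro H
    have hfin : H.edgeSet.Finite := Set.toFinite _
    unfold edgeCost
    rw [← hfin.coe_toFinset, finsum_mem_coe_finset, finsum_mem_coe_finset,
      finsum_mem_coe_finset, Finset.sum_add_distrib, Finset.mul_sum, Finset.mul_sum]
  rw [hsplit, hsplit] at key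
  have hlt : lam * edgeCost T c1 + (1 - lam) * edgeCost T c2 <
      lam * edgeCost Tstar c1 + (1 - lam) * edgeCost Tstar c2 := by
    rcases h3 with h | h
    · have := mul_lt_mul_of_pos_left h hlam0
      have h2' := mul_le_mul_of_nonneg_left h2 (by linarith : (0:ℝ) ≤ 1 - lam)
      linarith
    · have := mul_lt_mul_of_pos_left h (by linarith : (0:ℝ) < 1 - lam)
      have h1' := mul_le_mul_of_nonneg_left h1 hlam0.le
      linarith
  linarith
end
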